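/- If q ≤ 1/2 and c(1−q) ≤ 1, then Δ(x) = x − (1−q)(1 − e^{−cx}) − q(1 − e^{−cx} − cx·e^{−cx}) ≥ 0 for all x ∈ [0,1]. -/

import Mathlib

private lemma expDeriv (x : ℝ) : HasDerivAt (fun y : ℝ => Real.exp (-y)) (-Real.exp (-x)) x := by
  exact ((Real.hasDerivAt_exp (-x)).comp x (hasDerivAt_neg x)).congr_deriv (by ring)

-- level 1: 1 - t ≤ exp(-t)  (all t)
private lemma L1 (t : ℝ) : 1 - t ≤ Real.exp (-t) := by
  have := Real.add_one_le_exp (-t); linarith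

-- level 2: exp(-t) ≤ 1 - t + t^2/2 for t ≥ 0
private lemma L2 (t : ℝ) (ht : 0 ≤ t) : Real.exp (-t) ≤ 1 - t + t^2/2 := by
  have key : ∀ x : ℝ, HasDerivAt (fun y : ℝ => 1 - y + y^2/2 - Real.exp (-y))
      (-1 + x + Real.exp (-x)) x := by
    intro x
    have h2 : HasDerivAt (fun y : ℝ => 1 - y + y^2/2) (-1 + x) x := by
      have := ((hasDerivAt_id x).const_sub 1).add (((hasDerivAt_pow 2 x)).div_const 2)
      exact this.congr_deriv (by ring)
    exact (h2.sub (expDeriv x)).congr_deriv (by ring)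
  have mono : MonotoneOn (fun y : ℝ => 1 - y + y^2/2 - Real.exp (-y)) (Set.Ici 0) := by
    apply monotoneOn_of_deriv_nonneg (convex_Ici 0)
    · exact fun x _ => (key x).continuousAt.continuousWithinAt
    · exact fun x _ => (key x).differentiableAt.differentiableWithinAt
    · intro x hx
      rw [(key x).deriv]
      have := L1 x
      linarith
  have h := mono Set.self_mem_Ici (Set.mem_Ici.2 ht) ht
  simp at h
  linarith

-- level 3
private lemma L3 (t : ℝ) (ht : 0 ≤ t) : 1 - t + t^2/2 - t^3/6 ≤ Real.exp (-t) := by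
  have key : ∀ x : ℝ, HasDerivAt (fun y : ℝ => Real.exp (-y) - (1 - y + y^2/2 - y^3/6))
      (-Real.exp (-x) - (-1 + x - x^2/2)) x := by
    intro x
    have h2 : HasDerivAt (fun y : ℝ => 1 - y + y^2/2 - y^3/6) (-1 + x - x^2/2) x := by
      have := (((hasDerivAt_id x).const_sub 1).add ((hasDerivAt_pow 2 x).div_const 2)).sub
        ((hasDerivAt_pow 3 x).div_const 6)
      exact this.congr_deriv (by ring)
    exact (expDeriv x).sub h2
  have mono : MonotoneOn (fun y : ℝ => Real.exp (-y) - (1 - y + y^2/2 - y^3/6)) (Set.Ici 0) := by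
    apply monotoneOn_of_deriv_nonneg (convex_Ici 0)
    · exact fun x _ => (key x).continuousAt.continuousWithinAt
    · exact fun x _ => (key x).differentiableAt.differentiableWithinAt
    · intro x hx
      rw [(key x).deriv]
      have hx0 : (0:ℝ) ≤ x := le_of_lt (by simpa using hx)
      have := L2 x hx0
      linarith
  have h := mono Set.self_mem_Ici (Set.mem_Ici.2 ht) ht
  simp at h
  linarith

-- level 4
private lemma L4 (t : ℝ) (ht : 0 ≤ t) : Real.exp (-t) ≤ 1 - t + t^2/2 - t^3/6 + t^4/24 := by
  have key : ∀ x : ℝ, HasDerivAt (fun y : ℝ => 1 - y + y^2/2 - y^3/6 + y^4/24 - Real.exp (-y))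
      ((-1 + x - x^2/2 + x^3/6) + Real.exp (-x)) x := by
    intro x
    have h2 : HasDerivAt (fun y : ℝ => 1 - y + y^2/2 - y^3/6 + y^4/24) (-1 + x - x^2/2 + x^3/6) x := by
      have := ((((hasDerivAt_id x).const_sub 1).add ((hasDerivAt_pow 2 x).div_const 2)).sub
        ((hasDerivAt_pow 3 x).div_const 6)).add ((hasDerivAt_pow 4 x).div_const 24)
      exact this.congr_deriv (by ring)
    exact (h2.sub (expDeriv x)).congr_deriv (by ring)
  have mono : MonotoneOn (fun y : ℝ => 1 - y + y^2/2 - y^3/6 + y^4/24 - Real.exp (-y)) (Set.Ici 0) := by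
    apply monotoneOn_of_deriv_nonneg (convex_Ici 0)
    · exact fun x _ => (key x).continuousAt.continuousWithinAt
    · exact fun x _ => (key x).differentiableAt.differentiableWithinAt
    · intro x hx
      rw [(key x).deriv]
      have hx0 : (0:ℝ) ≤ x := le_of_lt (by simpa using hx)
      have := L3 x hx0
      linarith
  have h := mono Set.self_mem_Ici (Set.mem_Ici.2 ht) ht
  simp at h
  linarith

-- level 5
private lemma L5 (t : ℝ) (ht : 0 ≤ t) :
    1 - t + t^2/2 - t^3/6 + t^4/24 - t^5/120 ≤ Real.exp (-t) := by
  have key : ∀ x : ℝ, HasDerivAt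
      (fun y : ℝ => Real.exp (-y) - (1 - y + y^2/2 - y^3/6 + y^4/24 - y^5/120))
      (-Real.exp (-x) - (-1 + x - x^2/2 + x^3/6 - x^4/24)) x := by
    intro x
    have h2 : HasDerivAt (fun y : ℝ => 1 - y + y^2/2 - y^3/6 + y^4/24 - y^5/120)
        (-1 + x - x^2/2 + x^3/6 - x^4/24) x := by
      have := (((((hasDerivAt_id x).const_sub 1).add ((hasDerivAt_pow 2 x).div_const 2)).sub
        ((hasDerivAt_pow 3 x).div_const 6)).add ((hasDerivAt_pow 4 x).div_const 24)).sub
        ((hasDerivAt_pow 5 x).div_const 120)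
      exact this.congr_deriv (by ring)
    exact (expDeriv x).sub h2
  have mono : MonotoneOn
      (fun y : ℝ => Real.exp (-y) - (1 - y + y^2/2 - y^3/6 + y^4/24 - y^5/120)) (Set.Ici 0) := by
    apply monotoneOn_of_deriv_nonneg (convex_Ici 0)
    · exact fun x _ => (key x).continuousAt.continuousWithinAt
    · exact fun x _ => (key x).differentiableAt.differentiableWithinAt
    · intro x hx
      rw [(key x).deriv]
      have hx0 : (0:ℝ) ≤ x := le_of_lt (by simpa using hx)
      have := L4 x hx0
      linarith
  have h := mono Set.self_mem_Ici (Set.mem_Ici.2 ht) ht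
  simp at h
  linarith

-- polynomial inequality
private lemma polyF (t q : ℝ) (ht0 : 0 ≤ t) (ht2 : t ≤ 2) (hq0 : 0 ≤ q) (hq : q ≤ 1/2) :
    0 ≤ t^2*(1/2-q) + t^3*(q/2-1/6) + t^4*(1/24-q/6) + t^5*(q/24-1/120) - q*t^6/120 := by
  have hb : -1 + t/2 - t^2/6 + t^3/24 - t^4/120 ≤ 0 := by nlinarith [sq_nonneg t, sq_nonneg (t-2), sq_nonneg (t*(t-2)), pow_le_pow_left₀ ht0 ht2 4]
  have hg : 0 ≤ 1/12 - t/24 + t^2/80 - t^3/240 := by nlinarith [sq_nonneg (t-2), sq_nonneg t, mul_nonneg ht0 (sq_nonneg (t-2))]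
  nlinarith [mul_nonneg (mul_nonneg (sq_nonneg t) (by linarith : (0:ℝ) ≤ 1/2 - q)) (by linarith : (0:ℝ) ≤ -(-1 + t/2 - t^2/6 + t^3/24 - t^4/120)), mul_nonneg (mul_nonneg (mul_nonneg ht0 ht0) ht0) hg]

theorem stmt15 (c q : ℝ) (hc : 0 < c) (hq0 : 0 ≤ q) (hq : q ≤ 1 / 2)
    (hcq : c * (1 - q) ≤ 1) (x : ℝ) (hx0 : 0 ≤ x) (hx1 : x ≤ 1) :
    0 ≤ x - (1 - q) * (1 - Real.exp (-(c * x))) -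
      q * (1 - Real.exp (-(c * x)) - c * x * Real.exp (-(c * x))) := by
  set t := c * x with hts
  have ht0 : 0 ≤ t := mul_nonneg hc.le hx0
  have hc2 : c ≤ 2 := by nlinarith
  have ht2 : t ≤ 2 := by nlinarith
  have hE := L5 t ht0
  have h1qt : (0:ℝ) ≤ 1 + q * t := by positivity
  -- expression = x - 1 + (1 + q*t) * exp(-t)
  have hrw : x - (1 - q) * (1 - Real.exp (-t)) - q * (1 - Real.exp (-t) - t * Real.exp (-t))
      = x - 1 + (1 + q * t) * Real.exp (-t) := by ring
  rw [hrw]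
  have hlb : x - 1 + (1 + q * t) * (1 - t + t^2/2 - t^3/6 + t^4/24 - t^5/120)
      ≤ x - 1 + (1 + q * t) * Real.exp (-t) := by
    have := mul_le_mul_of_nonneg_left hE h1qt
    linarith
  have hA : 0 ≤ x * (1 - c * (1 - q)) := mul_nonneg hx0 (by linarith)
  have hF := polyF t q ht0 ht2 hq0 hq
  have hxt : x - 1 + (1 + q * t) * (1 - t + t^2/2 - t^3/6 + t^4/24 - t^5/120)
      = x * (1 - c * (1 - q)) +
        (t^2*(1/2-q) + t^3*(q/2-1/6) + t^4*(1/24-q/6) + t^5*(q/24-1/120) - q*t^6/120) := by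
    rw [hts]; ring
  linarith
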